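/- arXiv:2410.07638 — 4 statements merged into one kernel-verified Lean document; each statement's English description precedes it below -/
import Mathlib

section
/- Let a, b, c > 0 with ac ≥ 1/2. If t ≥ max{2a·ln(b), 4ac·ln(2ac)}, then t ≥ a·ln(b·t^c). -/
theorem stmt0 (a b c t : ℝ) (ha : 0 < a) (hb : 0 < b) (hc : 0 < c)
    (hac : 1/2 ≤ a * c)
    (ht : max (2 * a * Real.log b) (4 * a * c * Real.log (2 * a * c)) ≤ t) :
    a * Real.log (b * t ^ c) ≤ t := by
  have hA : (1:ℝ) ≤ 2 * (a * c) := by linarith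
  have hApos : 0 < a * c := by linarith
  have ht2 : 2 * a * Real.log b ≤ t := le_trans (le_max_left _ _) ht
  have ht4 : 4 * a * c * Real.log (2 * a * c) ≤ t := le_trans (le_max_right _ _) ht
  have hlog2A : 0 ≤ Real.log (2 * a * c) := by
    apply Real.log_nonneg; linarith [hA]
  have ht0 : 0 ≤ t := le_trans (by positivity) ht4
  rcases eq_or_lt_of_le ht0 with h0 | htpos
  · rw [← h0, Real.zero_rpow hc.ne', mul_zero, Real.log_zero, mul_zero]
  · rw [Real.log_mul hb.ne' (Real.rpow_pos_of_pos htpos c).ne', Real.log_rpow htpos]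
    have h1 : a * Real.log b ≤ t / 2 := by linarith
    have h2 : a * c * Real.log t ≤ t / 2 := by
      set A := a * c with hAdef
      have hsA : Real.sqrt (2 * A) * Real.sqrt (2 * A) = 2 * A :=
        Real.mul_self_sqrt (by linarith)
      have hst : Real.sqrt t * Real.sqrt t = t := Real.mul_self_sqrt ht0
      have hsApos : 0 < Real.sqrt (2 * A) := Real.sqrt_pos.mpr (by linarith)
      have hstpos : 0 < Real.sqrt t := Real.sqrt_pos.mpr htpos
      have key : Real.log (Real.sqrt t / Real.sqrt (2 * A)) ≤
          Real.sqrt t / Real.sqrt (2 * A) - 1 :=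
        Real.log_le_sub_one_of_pos (div_pos hstpos hsApos)
      rw [Real.log_div hstpos.ne' hsApos.ne'] at key
      have hlt : Real.log (Real.sqrt t) = Real.log t / 2 := Real.log_sqrt ht0
      have hlA : Real.log (Real.sqrt (2 * A)) = Real.log (2 * A) / 2 :=
        Real.log_sqrt (by linarith)
      rw [hlt, hlA] at key
      -- key : log t / 2 - log (2A)/2 ≤ √t/√(2A) - 1
      have hdiv : Real.sqrt t / Real.sqrt (2 * A) =
          Real.sqrt t * Real.sqrt (2 * A) / (2 * A) := by
        have h : Real.sqrt t * Real.sqrt (2*A) / (Real.sqrt (2*A) * Real.sqrt (2*A)) =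
            Real.sqrt t / Real.sqrt (2*A) := mul_div_mul_right _ _ hsApos.ne'
        rw [hsA] at h
        exact h.symm
      rw [hdiv] at key
      have hAM : Real.sqrt t * Real.sqrt (2 * A) ≤ t / 4 + 2 * A := by
        nlinarith [sq_nonneg (Real.sqrt t - 2 * Real.sqrt (2 * A))]
      have hlog2A' : 4 * A * Real.log (2 * A) ≤ t := by
        have : 2 * A = 2 * a * c := by ring
        rw [this]; convert ht4 using 2; ring
      -- from key: A log t ≤ A log(2A) + √t√(2A) - 2A
      have : A * Real.log t ≤ A * Real.log (2 * A) + Real.sqrt t * Real.sqrt (2 * A) - 2 * A := by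
        have := mul_le_mul_of_nonneg_left key (le_of_lt hApos)
        have h2A : (0:ℝ) < 2 * A := by linarith
        calc A * Real.log t = 2 * A * (Real.log t / 2 - Real.log (2*A)/2) + A * Real.log (2*A) := by ring
          _ ≤ 2 * A * (Real.sqrt t * Real.sqrt (2 * A) / (2 * A) - 1) + A * Real.log (2*A) := by
              nlinarith [key]
          _ = Real.sqrt t * Real.sqrt (2 * A) - 2*A + A * Real.log (2*A) := by
              field_simp
          _ = A * Real.log (2 * A) + Real.sqrt t * Real.sqrt (2 * A) - 2 * A := by ring
      nlinarith [hAM, hlog2A', this]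
    nlinarith [h1, h2]
end

section
/- Let p, p̂, β ≥ 0 with p̂ ≤ p + (5/2)·max{ (4/75)·p̂, √( (8/25)·p(1−p)·p̂ ) }. Then p̂ ≤ 4p. -/
theorem stmt9 (p phat β : ℝ) (hp : 0 ≤ p) (hphat : 0 ≤ phat) (hβ : 0 ≤ β)
    (h : phat ≤ p + 5 / 2 * max (4 / 75 * phat)
          (Real.sqrt (8 / 25 * p * (1 - p) * phat))) :
    phat ≤ 4 * p := by
  by_contra hc
  push_neg at hc
  set s := Real.sqrt (8 / 25 * p * (1 - p) * phat) with hs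
  have hs0 : 0 ≤ s := Real.sqrt_nonneg _
  have hs2 : s ^ 2 ≤ 2 / 25 * phat ^ 2 := by
    rcases le_or_gt 0 (8 / 25 * p * (1 - p) * phat) with harg | harg
    · have := Real.sq_sqrt harg
      rw [hs, this]
      nlinarith [sq_nonneg p, mul_nonneg hp hphat]
    · have : s = 0 := Real.sqrt_eq_zero_of_nonpos harg.le
      rw [this]
      nlinarith [sq_nonneg phat]
  rcases max_cases (4 / 75 * phat) s with ⟨hm, _⟩ | ⟨hm, _⟩ <;> rw [hm] at h
  · linarith
  · nlinarith [sq_nonneg (phat - p), sq_nonneg s]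
end

section
/- Suppose p, p̂, T, L_max > 0 and δ ∈ (0,1) satisfy p·T ≤ p̂·T + (5/4)·√(2p(1−p)·L_max·T·ln(2/δ)) and T_j := p̂·T > 0. Then p/T_j ≤ (4/T)·max{ 1, (25/16)·(L_max/T_j)·ln(2/δ) }. -/
theorem stmt10 (p phat T Lmax δ : ℝ) (hp : 0 < p) (hphat : 0 < phat)
    (hT : 0 < T) (hLmax : 0 < Lmax) (hδ0 : 0 < δ) (hδ1 : δ < 1)
    (h : p * T ≤ phat * T
        + 5 / 4 * Real.sqrt (2 * p * (1 - p) * Lmax * T * Real.log (2 / δ)))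
    (hTj : 0 < phat * T) :
    p / (phat * T)
      ≤ 4 / T * max 1 (25 / 16 * (Lmax / (phat * T)) * Real.log (2 / δ)) := by
  set L := Real.log (2 / δ) with hLdef
  have hL : 0 < L := Real.log_pos (by rw [lt_div_iff₀ hδ0]; linarith)
  have hmax1 : (1 : ℝ) ≤ max 1 (25 / 16 * (Lmax / (phat * T)) * L) := le_max_left _ _
  rcases le_or_gt (p * T) (4 * (phat * T)) with hc | hc
  · have h1 : p / (phat * T) ≤ 4 / T := by
      rw [div_le_div_iff₀ hTj hT]; nlinarith
    calc p / (phat * T) ≤ 4 / T := h1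
      _ = 4 / T * 1 := by ring
      _ ≤ 4 / T * max 1 (25 / 16 * (Lmax / (phat * T)) * L) :=
          mul_le_mul_of_nonneg_left hmax1 (by positivity)
  · have hS : Real.sqrt (2 * p * (1 - p) * Lmax * T * L)
        ≤ Real.sqrt (2 * p * Lmax * T * L) := by
      apply Real.sqrt_le_sqrt
      nlinarith [mul_nonneg (mul_nonneg (mul_nonneg (sq_nonneg p) hLmax.le) hT.le) hL.le]
    have h3 : 3 * (p * T) ≤ 5 * Real.sqrt (2 * p * Lmax * T * L) := by nlinarith
    have hsq : (5 * Real.sqrt (2 * p * Lmax * T * L)) ^ 2 = 25 * (2 * p * Lmax * T * L) := by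
      rw [mul_pow, Real.sq_sqrt (by positivity)]; ring
    have h4 : 9 * (p * T) ^ 2 ≤ 50 * (p * Lmax * T * L) := by nlinarith
    have h5 : p * T ≤ 50 / 9 * (Lmax * L) := by nlinarith [mul_pos hp hT]
    have h6 : p / (phat * T) ≤ 4 / T * (25 / 16 * (Lmax / (phat * T)) * L) := by
      rw [div_le_iff₀ hTj]
      have hrhs : 4 / T * (25 / 16 * (Lmax / (phat * T)) * L) * (phat * T)
          = 25 / 4 * (Lmax * L) / T := by field_simp; ring
      rw [hrhs, le_div_iff₀ hT]
      nlinarith [mul_nonneg hLmax.le hL.le]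
    calc p / (phat * T) ≤ 4 / T * (25 / 16 * (Lmax / (phat * T)) * L) := h6
      _ ≤ 4 / T * max 1 (25 / 16 * (Lmax / (phat * T)) * L) :=
          mul_le_mul_of_nonneg_left (le_max_right _ _) (by positivity)
end

section
/- Suppose p_1,…,p_N > 0 sum to 1, real gaps g_1,…,g_N satisfy Σ_j p_j g_j > 0, λ > 0, and for all j, 0 < λ·g_j < 1 possibly except when g_j < 0 (but with 1 + λ g_j > 0 for all j; and assume Σ_j p_j g_j³ ≤ 0). If Σ_{j=1}^N p_j/(1 + λ g_j) = 1, then λ ≤ (Σ_j p_j g_j) / (Σ_j p_j g_j²). -/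
theorem stmt17 (N : ℕ) (p g : Fin N → ℝ) (lam : ℝ)
    (hp : ∀ j, 0 < p j) (hp1 : ∑ j, p j = 1)
    (hg : 0 < ∑ j, p j * g j) (hlam : 0 < lam)
    (hsmall : ∀ j, |lam * g j| < 1)
    (hcube : ∑ j, p j * (g j) ^ 3 ≤ 0)
    (heq : ∑ j, p j / (1 + lam * g j) = 1) :
    lam ≤ (∑ j, p j * g j) / (∑ j, p j * (g j) ^ 2) := by
  have hpos : ∀ j, 0 < 1 + lam * g j := by
    intro j; have := (abs_lt.mp (hsmall j)).1; linarith
  have key : ∀ j ∈ Finset.univ, p j * (1 - lam * g j + (lam * g j) ^ 2 - (lam * g j) ^ 3)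
      ≤ p j / (1 + lam * g j) := by
    intro j _
    rw [le_div_iff₀ (hpos j)]
    nlinarith [hp j, sq_nonneg (lam * g j), sq_nonneg ((lam * g j) ^ 2),
      mul_pos (hp j) (pow_pos (mul_pos hlam hlam) 2)]
  have hsum : ∑ j, p j * (1 - lam * g j + (lam * g j) ^ 2 - (lam * g j) ^ 3) ≤ 1 := by
    calc _ ≤ ∑ j, p j / (1 + lam * g j) := Finset.sum_le_sum key
    _ = 1 := heq
  have expand : ∑ j, p j * (1 - lam * g j + (lam * g j) ^ 2 - (lam * g j) ^ 3)
      = 1 - lam * (∑ j, p j * g j) + lam ^ 2 * (∑ j, p j * (g j) ^ 2)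
        - lam ^ 3 * (∑ j, p j * (g j) ^ 3) := by
    have : ∑ j, p j * (1 - lam * g j + (lam * g j) ^ 2 - (lam * g j) ^ 3)
        = (∑ j, p j) - lam * (∑ j, p j * g j) + lam ^ 2 * (∑ j, p j * (g j) ^ 2)
          - lam ^ 3 * (∑ j, p j * (g j) ^ 3) := by
      rw [Finset.mul_sum, Finset.mul_sum, Finset.mul_sum]
      rw [← Finset.sum_sub_distrib, ← Finset.sum_add_distrib, ← Finset.sum_sub_distrib]
      exact Finset.sum_congr rfl fun j _ => by ring
    rw [this, hp1]
  rw [expand] at hsum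
  have hS2nn : ∀ j ∈ Finset.univ, 0 ≤ p j * (g j) ^ 2 :=
    fun j _ => mul_nonneg (hp j).le (sq_nonneg _)
  have hS2pos : 0 < ∑ j, p j * (g j) ^ 2 := by
    rcases (Finset.sum_nonneg hS2nn).lt_or_eq with h | h
    · exact h
    · exfalso
      have hz := (Finset.sum_eq_zero_iff_of_nonneg hS2nn).mp h.symm
      have : ∑ j, p j * g j = 0 := by
        apply Finset.sum_eq_zero
        intro j _
        have := hz j (Finset.mem_univ j)
        have hg0 : g j = 0 := by
          by_contra hgne
          have hpj := hp j
          have : (0:ℝ) < p j * g j ^ 2 := by positivity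
          linarith
        simp [hg0]
      linarith
  rw [le_div_iff₀ hS2pos]
  nlinarith [mul_nonneg (pow_pos hlam 3).le (neg_nonneg.mpr hcube)]
end
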